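/- Let m, m' be finite sets of labeled points and let M be the (|m|·|m'|)×(|m|·|m'|) matrix indexed by pairs (i₁,i₂) ∈ [1,|m|]×[1,|m'|], with M[(i₁,i₂),(j₁,j₂)] = K_Feat(l_{i₁}, l'_{i₂}) · K_Dist(‖x_{i₁}−x_{j₁}‖, ‖x'_{i₂}−x'_{j₂}‖) · 1[i₁≠j₁] · 1[i₂≠j₂]. Then trace(M³) = Σ_{p∈P(m)} Σ_{p'∈P(m')} K_P(p,p'), where P(m) is the set of ordered triples of pairwise-distinct points of m and K_P(p,p') = ∏_{i=1}^{3} K_Feat(l_i,l'_i)·K_Dist(‖x_i−x_{i+1}‖, ‖x'_i−x'_{i+1}‖) with indices mod 3. -/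
import Mathlib

private lemma trace_cube {N : Type*} [Fintype N] [DecidableEq N] (M : Matrix N N ℝ) :
    Matrix.trace (M ^ 3) = ∑ a, ∑ b, ∑ c, M a b * M b c * M c a := by
  rw [pow_succ, pow_two, Matrix.trace]
  simp only [Matrix.diag_apply, Matrix.mul_apply, Finset.sum_mul, Finset.mul_sum]
  refine Finset.sum_congr rfl fun a _ => ?_
  rw [Finset.sum_comm]

private lemma swap6 {n n' : ℕ}
    (f : Fin n → Fin n → Fin n → Fin n' → Fin n' → Fin n' → ℝ) :
    (∑ i₁, ∑ i₂, ∑ j₁, ∑ j₂, ∑ k₁, ∑ k₂, f i₁ j₁ k₁ i₂ j₂ k₂) =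
    ∑ i₁, ∑ j₁, ∑ k₁, ∑ i₂, ∑ j₂, ∑ k₂, f i₁ j₁ k₁ i₂ j₂ k₂ := by
  refine Finset.sum_congr rfl fun i₁ _ => ?_
  rw [Finset.sum_comm (γ := Fin n') (α := Fin n)]
  refine Finset.sum_congr rfl fun j₁ _ => ?_
  calc (∑ i₂ : Fin n', ∑ j₂ : Fin n', ∑ k₁ : Fin n, ∑ k₂ : Fin n', f i₁ j₁ k₁ i₂ j₂ k₂)
      = ∑ i₂ : Fin n', ∑ k₁ : Fin n, ∑ j₂ : Fin n', ∑ k₂ : Fin n', f i₁ j₁ k₁ i₂ j₂ k₂ :=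
        Finset.sum_congr rfl fun i₂ _ => Finset.sum_comm
    _ = ∑ k₁ : Fin n, ∑ i₂ : Fin n', ∑ j₂ : Fin n', ∑ k₂ : Fin n', f i₁ j₁ k₁ i₂ j₂ k₂ :=
        Finset.sum_comm

theorem pharmacophore_kernel_trace {L : Type*} (n n' : ℕ)
    (x : Fin n → EuclideanSpace ℝ (Fin 3)) (l : Fin n → L)
    (x' : Fin n' → EuclideanSpace ℝ (Fin 3)) (l' : Fin n' → L)
    (KFeat : L → L → ℝ) (KDist : ℝ → ℝ → ℝ)
    (M : Matrix (Fin n × Fin n') (Fin n × Fin n') ℝ)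
    (hM : ∀ i j : Fin n × Fin n',
      M i j = KFeat (l i.1) (l' i.2) * KDist (dist (x i.1) (x j.1)) (dist (x' i.2) (x' j.2)) *
        (if i.1 ≠ j.1 then 1 else 0) * (if i.2 ≠ j.2 then 1 else 0)) :
    Matrix.trace (M ^ 3) =
      ∑ i₁ : Fin n, ∑ j₁ : Fin n, ∑ k₁ : Fin n, ∑ i₂ : Fin n', ∑ j₂ : Fin n', ∑ k₂ : Fin n',
        (if i₁ ≠ j₁ ∧ j₁ ≠ k₁ ∧ k₁ ≠ i₁ then 1 else 0) *
        (if i₂ ≠ j₂ ∧ j₂ ≠ k₂ ∧ k₂ ≠ i₂ then 1 else 0) *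
        (KFeat (l i₁) (l' i₂) * KDist (dist (x i₁) (x j₁)) (dist (x' i₂) (x' j₂)) *
         (KFeat (l j₁) (l' j₂) * KDist (dist (x j₁) (x k₁)) (dist (x' j₂) (x' k₂))) *
         (KFeat (l k₁) (l' k₂) * KDist (dist (x k₁) (x i₁)) (dist (x' k₂) (x' i₂)))) := by
  rw [trace_cube M]
  rw [show (∑ a : Fin n × Fin n', ∑ b : Fin n × Fin n', ∑ c : Fin n × Fin n',
        M a b * M b c * M c a) =
      ∑ i₁ : Fin n, ∑ i₂ : Fin n', ∑ j₁ : Fin n, ∑ j₂ : Fin n', ∑ k₁ : Fin n, ∑ k₂ : Fin n',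
        M (i₁, i₂) (j₁, j₂) * M (j₁, j₂) (k₁, k₂) * M (k₁, k₂) (i₁, i₂) from by
    rw [Fintype.sum_prod_type]
    refine Finset.sum_congr rfl fun i₁ _ => Finset.sum_congr rfl fun i₂ _ => ?_
    rw [Fintype.sum_prod_type]
    refine Finset.sum_congr rfl fun j₁ _ => Finset.sum_congr rfl fun j₂ _ => ?_
    rw [Fintype.sum_prod_type]]
  rw [swap6]
  refine Finset.sum_congr rfl fun i₁ _ => Finset.sum_congr rfl fun j₁ _ =>
    Finset.sum_congr rfl fun k₁ _ => Finset.sum_congr rfl fun i₂ _ =>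
    Finset.sum_congr rfl fun j₂ _ => Finset.sum_congr rfl fun k₂ _ => ?_
  rw [hM, hM, hM]
  simp only
  by_cases h1 : i₁ ≠ j₁ <;> by_cases h2 : j₁ ≠ k₁ <;> by_cases h3 : k₁ ≠ i₁ <;>
    by_cases h4 : i₂ ≠ j₂ <;> by_cases h5 : j₂ ≠ k₂ <;> by_cases h6 : k₂ ≠ i₂ <;>
    simp [h1, h2, h3, h4, h5, h6]
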